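/- If R is a right quasi-duo ring, then the quotient R/J(R) is a reduced ring (has no nonzero nilpotent elements). -/

import Mathlib

/-- A ring is right quasi-duo if every maximal right ideal (a coatom in the
lattice of right ideals, i.e. submodules of `R` over `Rᵐᵒᵖ`) is two-sided. -/
def RightQuasiDuo (R : Type*) [Ring R] : Prop :=
  ∀ I : Submodule Rᵐᵒᵖ R, IsCoatom I → ∀ r x : R, x ∈ I → r * x ∈ I

/-- A ring is left quasi-duo if every maximal left ideal is two-sided. -/
def LeftQuasiDuo (R : Type*) [Ring R] : Prop :=
  ∀ I : Submodule R R, IsCoatom I → ∀ r x : R, x ∈ I → x * r ∈ I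

section aux

variable {R : Type*} [Ring R]

lemma coatomic_right : IsCoatomic (Submodule Rᵐᵒᵖ R) := by
  apply CompleteLattice.coatomic_of_top_compact
  have htop : (⊤ : Submodule Rᵐᵒᵖ R) = Submodule.span Rᵐᵒᵖ {(1 : R)} := by
    refine le_antisymm (fun x _ => ?_) le_top
    have hx : x = (MulOpposite.op x) • (1 : R) := (one_mul x).symm
    rw [hx]
    exact Submodule.smul_mem _ _ (Submodule.mem_span_singleton_self 1)
  rw [htop]
  exact Submodule.singleton_span_isCompactElement 1

lemma smul_right (M : Submodule Rᵐᵒᵖ R) {x : R} (hx : x ∈ M) (y : R) : x * y ∈ M :=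
  M.smul_mem (MulOpposite.op y) hx

lemma top_of_one_mem (M : Submodule Rᵐᵒᵖ R) (h1 : (1 : R) ∈ M) : M = ⊤ := by
  refine Submodule.eq_top_iff'.mpr fun x => ?_
  simpa using smul_right M h1 x

/-- The Jacobson radical (of `⊥`) is a two-sided ideal. -/
lemma jac_mul_right {x : R} (hx : x ∈ Ideal.jacobson (⊥ : Ideal R)) (y : R) :
    x * y ∈ Ideal.jacobson (⊥ : Ideal R) :=
  Ideal.mul_mem_right y (Ideal.jacobson (⊥ : Ideal R)) hx

/-- Elements of the Jacobson radical give units after adding one. -/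
lemma isUnit_one_add_jac {x : R} (hx : x ∈ Ideal.jacobson (⊥ : Ideal R)) :
    IsUnit (1 + x) := by
  obtain ⟨z, hz⟩ := Ideal.mem_jacobson_iff.mp hx 1
  rw [Ideal.mem_bot, mul_one, sub_eq_zero] at hz
  -- hz : z * x + z = 1
  have hz1 : z * (1 + x) = 1 := by rw [mul_add, mul_one, add_comm]; exact hz
  have hzeq : z = 1 + -(z * x) := by
    rw [← sub_eq_add_neg, eq_sub_iff_add_eq, add_comm]; exact hz
  have hzx : -(z * x) ∈ Ideal.jacobson (⊥ : Ideal R) :=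
    neg_mem (Ideal.mul_mem_left _ z hx)
  obtain ⟨w, hw⟩ := Ideal.mem_jacobson_iff.mp hzx 1
  rw [Ideal.mem_bot, mul_one, sub_eq_zero] at hw
  have hw1 : w * z = 1 := by
    rw [hzeq, mul_add, mul_one, add_comm]; exact hw
  have hveq : (1 + x) = w := by
    calc (1 + x) = (w * z) * (1 + x) := by rw [hw1, one_mul]
    _ = w * (z * (1 + x)) := by rw [mul_assoc]
    _ = w := by rw [hz1, mul_one]
  have hv1 : (1 + x) * z = 1 := by rw [hveq]; exact hw1
  exact ⟨⟨1 + x, z, hv1, hz1⟩, rfl⟩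

/-- `1 + ab` is a unit iff `1 + ba` is (one direction suffices). -/
lemma isUnit_swap {a b : R} (h : IsUnit (1 + a * b)) : IsUnit (1 + b * a) := by
  obtain ⟨u, hu⟩ := h
  set c : R := ↑u⁻¹ with hc
  have huc : (1 + a * b) * c = 1 := by rw [← hu]; exact u.mul_inv
  have hcu : c * (1 + a * b) = 1 := by rw [← hu]; exact u.inv_mul
  have h1 : a * b * c = 1 - c := by
    have := huc
    rw [add_mul, one_mul] at this
    rw [eq_sub_iff_add_eq, add_comm]; exact this
  have h2 : c * (a * b) = 1 - c := by
    have := hcu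
    rw [mul_add, mul_one] at this
    rw [eq_sub_iff_add_eq, add_comm]; exact this
  refine ⟨⟨1 + b * a, 1 - b * c * a, ?_, ?_⟩, rfl⟩
  · calc (1 + b * a) * (1 - b * c * a)
        = 1 - b * c * a + b * a - b * ((a * b * c) * a) := by noncomm_ring
    _ = 1 - b * c * a + b * a - b * ((1 - c) * a) := by rw [h1]
    _ = 1 := by noncomm_ring
  · calc (1 - b * c * a) * (1 + b * a)
        = 1 + b * a - b * c * a - b * ((c * (a * b)) * a) := by noncomm_ring
    _ = 1 + b * a - b * c * a - b * ((1 - c) * a) := by rw [h2]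
    _ = 1 := by noncomm_ring

/-- The Jacobson radical is contained in every maximal right ideal. -/
lemma jacobson_le_coatom (M : Submodule Rᵐᵒᵖ R) (hM : IsCoatom M)
    {x : R} (hx : x ∈ Ideal.jacobson (⊥ : Ideal R)) : x ∈ M := by
  by_contra hxM
  have hsup : M ⊔ Submodule.span Rᵐᵒᵖ {x} = ⊤ := by
    refine hM.2 _ (lt_of_le_of_ne le_sup_left ?_)
    intro he
    exact hxM (he ▸ (le_sup_right : _ ≤ M ⊔ Submodule.span Rᵐᵒᵖ {x})
      (Submodule.mem_span_singleton_self x))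
  have h1 : (1 : R) ∈ M ⊔ Submodule.span Rᵐᵒᵖ {x} := hsup ▸ Submodule.mem_top
  obtain ⟨m, hm, z, hz, hmz⟩ := Submodule.mem_sup.mp h1
  obtain ⟨c, rfl⟩ := Submodule.mem_span_singleton.mp hz
  rw [MulOpposite.smul_eq_mul_unop] at hmz
  have hmeq : m = 1 + -(x * c.unop) := by
    rw [← sub_eq_add_neg, eq_sub_iff_add_eq]; exact hmz
  have hu : IsUnit m := by
    rw [hmeq]
    exact isUnit_one_add_jac (neg_mem (jac_mul_right hx c.unop))
  obtain ⟨u, hueq⟩ := hu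
  have h1M : (1 : R) ∈ M := by
    have := smul_right M hm (↑u⁻¹ : R)
    rwa [← hueq, u.mul_inv] at this
  exact hM.1 (top_of_one_mem M h1M)

/-- In a right quasi-duo ring, an element whose square is in the Jacobson radical
lies in every maximal right ideal. -/
lemma mem_coatom_of_sq (h : RightQuasiDuo R) (M : Submodule Rᵐᵒᵖ R) (hM : IsCoatom M)
    {a : R} (ha : a * a ∈ Ideal.jacobson (⊥ : Ideal R)) : a ∈ M := by
  by_contra haM
  have hsup : M ⊔ Submodule.span Rᵐᵒᵖ {a} = ⊤ := by
    refine hM.2 _ (lt_of_le_of_ne le_sup_left ?_)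
    intro he
    exact haM (he ▸ (le_sup_right : _ ≤ M ⊔ Submodule.span Rᵐᵒᵖ {a})
      (Submodule.mem_span_singleton_self a))
  have h1 : (1 : R) ∈ M ⊔ Submodule.span Rᵐᵒᵖ {a} := hsup ▸ Submodule.mem_top
  obtain ⟨m, hm, z, hz, hmz⟩ := Submodule.mem_sup.mp h1
  obtain ⟨c, rfl⟩ := Submodule.mem_span_singleton.mp hz
  rw [MulOpposite.smul_eq_mul_unop] at hmz
  set r := c.unop with hr
  have h1ar : (1 : R) - a * r ∈ M := by
    have heq : (1 : R) - a * r = m := by rw [sub_eq_iff_eq_add]; exact hmz.symm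
    rwa [heq]
  set b := r * a * r with hb
  have h1ab : (1 : R) - a * b ∈ M := by
    have heq : (1 : R) - a * b = (1 - a * r) + (a * r) * (1 - a * r) := by
      rw [hb]; noncomm_ring
    rw [heq]
    exact M.add_mem h1ar (h M hM _ _ h1ar)
  have h1abb : (1 : R) - (a * a) * (b * b) ∈ M := by
    have heq : (1 : R) - (a * a) * (b * b) = (1 - a * b) + a * ((1 - a * b) * b) := by
      noncomm_ring
    rw [heq]
    exact M.add_mem h1ab (h M hM _ _ (smul_right M h1ab b))
  have habM : (a * a) * (b * b) ∈ M := smul_right M (jacobson_le_coatom M hM ha) _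
  have h1M : (1 : R) ∈ M := by
    have := M.add_mem h1abb habM
    simpa using this
  exact hM.1 (top_of_one_mem M h1M)

lemma key (h : RightQuasiDuo R) {a : R} (ha : a * a ∈ Ideal.jacobson (⊥ : Ideal R)) :
    a ∈ Ideal.jacobson (⊥ : Ideal R) := by
  -- first: every element of the form 1 + a * y has a right inverse
  have hri : ∀ y : R, ∃ w : R, (1 + a * y) * w = 1 := by
    intro y
    by_contra hno
    push_neg at hno
    set z := 1 + a * y with hz
    have hzspan : (1 : R) ∉ Submodule.span Rᵐᵒᵖ {z} := by
      intro h1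
      obtain ⟨c, hc⟩ := Submodule.mem_span_singleton.mp h1
      rw [MulOpposite.smul_eq_mul_unop] at hc
      exact hno c.unop hc
    have hne : Submodule.span Rᵐᵒᵖ {z} ≠ ⊤ := fun he => hzspan (he ▸ Submodule.mem_top)
    obtain ⟨M, hM, hle⟩ :=
      (coatomic_right.eq_top_or_exists_le_coatom (Submodule.span Rᵐᵒᵖ {z})).resolve_left hne
    have hzM : z ∈ M := hle (Submodule.mem_span_singleton_self z)
    have haM : a ∈ M := mem_coatom_of_sq h M hM ha
    have h1M : (1 : R) ∈ M := by
      have := M.sub_mem hzM (smul_right M haM y)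
      simpa [hz] using this
    exact hM.1 (top_of_one_mem M h1M)
  -- these right inverses are two-sided, so 1 + a * y is a unit for all y
  have hunit : ∀ y : R, IsUnit (1 + a * y) := by
    intro y
    obtain ⟨w, hw⟩ := hri y
    have hwform : w = 1 + a * (-(y * w)) := by
      have h1 : w + a * (y * w) = 1 := by
        have := hw
        rw [add_mul, one_mul, mul_assoc] at this
        exact this
      rw [mul_neg, ← sub_eq_add_neg, eq_sub_iff_add_eq]; exact h1
    obtain ⟨v, hv⟩ := hri (-(y * w))
    rw [← hwform] at hv
    have hzv : 1 + a * y = v := by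
      calc 1 + a * y = (1 + a * y) * (w * v) := by rw [hv, mul_one]
      _ = ((1 + a * y) * w) * v := by rw [mul_assoc]
      _ = v := by rw [hw, one_mul]
    have hwz : w * (1 + a * y) = 1 := by rw [hzv]; exact hv
    exact ⟨⟨1 + a * y, w, hw, hwz⟩, rfl⟩
  -- conclude membership in the Jacobson radical (left-sided characterization)
  rw [Ideal.mem_jacobson_iff]
  intro y
  obtain ⟨u, hu⟩ := isUnit_swap (hunit y)
  refine ⟨(↑u⁻¹ : R), ?_⟩
  rw [Ideal.mem_bot, sub_eq_zero]
  have := u.inv_mul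
  rw [hu, mul_add, mul_one, ← mul_assoc] at this
  rw [add_comm]; exact this

lemma key_pow (h : RightQuasiDuo R) : ∀ n : ℕ, ∀ a : R,
    a ^ n ∈ Ideal.jacobson (⊥ : Ideal R) → a ∈ Ideal.jacobson (⊥ : Ideal R) := by
  intro n
  induction n using Nat.strong_induction_on with
  | _ n ih =>
    intro a ha
    rcases Nat.lt_or_ge n 2 with hn | hn
    · interval_cases n
      · have h1 : (1 : R) ∈ Ideal.jacobson (⊥ : Ideal R) := by simpa using ha
        simpa using Ideal.mul_mem_left _ a h1
      · simpa using ha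
    · set m := (n + 1) / 2 with hm
      have hmn : m < n := by omega
      have h2m : n ≤ m + m := by omega
      have hsq : (a ^ m) * (a ^ m) ∈ Ideal.jacobson (⊥ : Ideal R) := by
        rw [← pow_add]
        obtain ⟨k, hk⟩ := Nat.exists_eq_add_of_le h2m
        rw [hk, pow_add]
        exact jac_mul_right ha _
      exact ih m hmn a (key h hsq)

end aux

theorem stmt1 (R : Type*) [Ring R] (S : Type*) [Ring S]
    (f : R →+* S) (hf : Function.Surjective f)
    (hker : ∀ x : R, f x = 0 ↔ x ∈ Ideal.jacobson (⊥ : Ideal R))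
    (h : RightQuasiDuo R) : IsReduced S := by
  constructor
  intro s hs
  obtain ⟨n, hn⟩ := hs
  obtain ⟨r, rfl⟩ := hf s
  have hfn : f (r ^ n) = 0 := by rw [map_pow, hn]
  have hrn : r ^ n ∈ Ideal.jacobson (⊥ : Ideal R) := (hker _).mp hfn
  exact (hker r).mpr (key_pow h n r hrn)
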